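/- The Lie algebra of derivations of the split octonions (Zorn algebra) over a field of characteristic not 2 or 3 has dimension exactly 14. -/

import Mathlib

open Matrix

abbrev Zorn (R : Type*) [CommRing R] : Type _ := (R × (Fin 3 → R)) × ((Fin 3 → R) × R)

variable {R : Type*} [CommRing R]

def zmul (X Y : Zorn R) : Zorn R :=
  ((X.1.1 * Y.1.1 + X.1.2 ⬝ᵥ Y.2.1,
    X.1.1 • Y.1.2 + Y.2.2 • X.1.2 - crossProduct X.2.1 Y.2.1),
   (Y.1.1 • X.2.1 + X.2.2 • Y.2.1 + crossProduct X.1.2 Y.1.2,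
    X.2.2 * Y.2.2 + X.2.1 ⬝ᵥ Y.1.2))

def zornOne : Zorn R := ((1, 0), (0, 1))
def zA : Zorn R := ((1, 0), (0, 0))
def zB : Zorn R := ((0, 0), (0, 1))
def zC (i : Fin 3) : Zorn R := ((0, Pi.single i 1), (0, 0))
def zD (i : Fin 3) : Zorn R := ((0, 0), (Pi.single i 1, 0))

def IsZornDeriv (d : Zorn R →ₗ[R] Zorn R) : Prop :=
  ∀ X Y : Zorn R, d (zmul X Y) = zmul (d X) Y + zmul X (d Y)

lemma zmul_add_left (a b Y : Zorn R) : zmul (a + b) Y = zmul a Y + zmul b Y := by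
  refine Prod.ext (Prod.ext ?_ ?_) (Prod.ext ?_ ?_) <;>
    simp only [zmul, Prod.fst_add, Prod.snd_add, Pi.add_apply,
      add_dotProduct, dotProduct_add, add_mul, mul_add,
      add_smul, smul_add, map_add, LinearMap.add_apply] <;> abel

lemma zmul_add_right (X a b : Zorn R) : zmul X (a + b) = zmul X a + zmul X b := by
  refine Prod.ext (Prod.ext ?_ ?_) (Prod.ext ?_ ?_) <;>
    simp only [zmul, Prod.fst_add, Prod.snd_add, Pi.add_apply,
      add_dotProduct, dotProduct_add, add_mul, mul_add,
      add_smul, smul_add, map_add, LinearMap.add_apply] <;> abel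

lemma zmul_smul_left (c : R) (a Y : Zorn R) : zmul (c • a) Y = c • zmul a Y := by
  refine Prod.ext (Prod.ext ?_ ?_) (Prod.ext ?_ ?_) <;>
    simp only [zmul, Prod.smul_fst, Prod.smul_snd,
      smul_dotProduct, dotProduct_smul, smul_eq_mul,
      _root_.map_smul, LinearMap.smul_apply] <;>
    first | ring1 | module

lemma zmul_smul_right (c : R) (X a : Zorn R) : zmul X (c • a) = c • zmul X a := by
  refine Prod.ext (Prod.ext ?_ ?_) (Prod.ext ?_ ?_) <;>
    simp only [zmul, Prod.smul_fst, Prod.smul_snd,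
      smul_dotProduct, dotProduct_smul, smul_eq_mul,
      _root_.map_smul, LinearMap.smul_apply] <;>
    first | ring1 | module

def ZornDer (R : Type*) [CommRing R] : Submodule R (Zorn R →ₗ[R] Zorn R) where
  carrier := {d | IsZornDeriv d}
  zero_mem' := by intro X Y; simp [IsZornDeriv, zmul]; rfl
  add_mem' := by
    intro d₁ d₂ h₁ h₂ X Y
    simp only [LinearMap.add_apply, h₁ X Y, h₂ X Y, zmul_add_left, zmul_add_right]
    abel
  smul_mem' := by
    intro c d h X Y
    simp only [LinearMap.smul_apply, h X Y, zmul_smul_left, zmul_smul_right, smul_add]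


/-! ### Auxiliary development -/

section Aux

lemma vec3_ext {x y : Fin 3 → R} (h0 : x 0 = y 0) (h1 : x 1 = y 1) (h2 : x 2 = y 2) :
    x = y := by
  funext i
  fin_cases i
  · exact h0
  · exact h1
  · exact h2

/-- The candidate derivation attached to a matrix `A` and vectors `u`, `v`. -/
def derOf (A : Matrix (Fin 3) (Fin 3) R) (u v : Fin 3 → R) : Zorn R →ₗ[R] Zorn R where
  toFun X := ((-(v ⬝ᵥ X.1.2) - u ⬝ᵥ X.2.1,
      ![(X.1.1 - X.2.2) * u 0 + (A 0 0 * X.1.2 0 + A 0 1 * X.1.2 1 + A 0 2 * X.1.2 2)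
          + (v 1 * X.2.1 2 - v 2 * X.2.1 1),
        (X.1.1 - X.2.2) * u 1 + (A 1 0 * X.1.2 0 + A 1 1 * X.1.2 1 + A 1 2 * X.1.2 2)
          + (v 2 * X.2.1 0 - v 0 * X.2.1 2),
        (X.1.1 - X.2.2) * u 2 + (A 2 0 * X.1.2 0 + A 2 1 * X.1.2 1 + A 2 2 * X.1.2 2)
          + (v 0 * X.2.1 1 - v 1 * X.2.1 0)]),
     (![(X.1.1 - X.2.2) * v 0 + (u 1 * X.1.2 2 - u 2 * X.1.2 1)
          - (A 0 0 * X.2.1 0 + A 1 0 * X.2.1 1 + A 2 0 * X.2.1 2),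
        (X.1.1 - X.2.2) * v 1 + (u 2 * X.1.2 0 - u 0 * X.1.2 2)
          - (A 0 1 * X.2.1 0 + A 1 1 * X.2.1 1 + A 2 1 * X.2.1 2),
        (X.1.1 - X.2.2) * v 2 + (u 0 * X.1.2 1 - u 1 * X.1.2 0)
          - (A 0 2 * X.2.1 0 + A 1 2 * X.2.1 1 + A 2 2 * X.2.1 2)],
      v ⬝ᵥ X.1.2 + u ⬝ᵥ X.2.1))
  map_add' X Y := by
    refine Prod.ext (Prod.ext ?_ (vec3_ext ?_ ?_ ?_)) (Prod.ext (vec3_ext ?_ ?_ ?_) ?_) <;>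
      simp only [Prod.fst_add, Prod.snd_add, Pi.add_apply, dotProduct_add,
        Matrix.cons_val_zero, Matrix.cons_val_one, Matrix.head_cons, Matrix.cons_val_two,
        Matrix.tail_cons] <;> ring
  map_smul' c X := by
    refine Prod.ext (Prod.ext ?_ (vec3_ext ?_ ?_ ?_)) (Prod.ext (vec3_ext ?_ ?_ ?_) ?_) <;>
      simp only [Prod.smul_fst, Prod.smul_snd, Pi.smul_apply, dotProduct_smul,
        smul_eq_mul, RingHom.id_apply, Matrix.cons_val_zero, Matrix.cons_val_one,
        Matrix.head_cons, Matrix.cons_val_two, Matrix.tail_cons] <;> ring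

@[simp] lemma derOf_apply (A : Matrix (Fin 3) (Fin 3) R) (u v : Fin 3 → R) (X : Zorn R) :
    derOf A u v X = ((-(v ⬝ᵥ X.1.2) - u ⬝ᵥ X.2.1,
      ![(X.1.1 - X.2.2) * u 0 + (A 0 0 * X.1.2 0 + A 0 1 * X.1.2 1 + A 0 2 * X.1.2 2)
          + (v 1 * X.2.1 2 - v 2 * X.2.1 1),
        (X.1.1 - X.2.2) * u 1 + (A 1 0 * X.1.2 0 + A 1 1 * X.1.2 1 + A 1 2 * X.1.2 2)
          + (v 2 * X.2.1 0 - v 0 * X.2.1 2),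
        (X.1.1 - X.2.2) * u 2 + (A 2 0 * X.1.2 0 + A 2 1 * X.1.2 1 + A 2 2 * X.1.2 2)
          + (v 0 * X.2.1 1 - v 1 * X.2.1 0)]),
     (![(X.1.1 - X.2.2) * v 0 + (u 1 * X.1.2 2 - u 2 * X.1.2 1)
          - (A 0 0 * X.2.1 0 + A 1 0 * X.2.1 1 + A 2 0 * X.2.1 2),
        (X.1.1 - X.2.2) * v 1 + (u 2 * X.1.2 0 - u 0 * X.1.2 2)
          - (A 0 1 * X.2.1 0 + A 1 1 * X.2.1 1 + A 2 1 * X.2.1 2),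
        (X.1.1 - X.2.2) * v 2 + (u 0 * X.1.2 1 - u 1 * X.1.2 0)
          - (A 0 2 * X.2.1 0 + A 1 2 * X.2.1 1 + A 2 2 * X.2.1 2)],
      v ⬝ᵥ X.1.2 + u ⬝ᵥ X.2.1)) := rfl

lemma derOf_isDeriv (A : Matrix (Fin 3) (Fin 3) R) (hA : A.trace = 0) (u v : Fin 3 → R) :
    IsZornDeriv (derOf A u v) := by
  rw [Matrix.trace_fin_three] at hA
  have h22 : A 2 2 = -(A 0 0 + A 1 1) := by linear_combination hA
  intro X Y
  refine Prod.ext (Prod.ext ?_ (vec3_ext ?_ ?_ ?_)) (Prod.ext (vec3_ext ?_ ?_ ?_) ?_) <;>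
    simp only [derOf, zmul, LinearMap.coe_mk, AddHom.coe_mk, Prod.fst_add, Prod.snd_add,
      cross_apply, dotProduct, Fin.sum_univ_three, Pi.add_apply, Pi.sub_apply, Pi.smul_apply,
      smul_eq_mul, Matrix.cons_val_zero, Matrix.cons_val_one, Matrix.head_cons,
      Matrix.cons_val_two, Matrix.tail_cons] <;>
    simp only [h22] <;> ring

end Aux

section Mul

lemma zmul_zA_left (W : Zorn R) : zmul zA W = ((W.1.1, W.1.2), (0, 0)) := by
  refine Prod.ext (Prod.ext ?_ ?_) (Prod.ext ?_ ?_) <;>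
    simp [zmul, zA]

lemma zmul_zA_right (W : Zorn R) : zmul W zA = ((W.1.1, 0), (W.2.1, 0)) := by
  refine Prod.ext (Prod.ext ?_ ?_) (Prod.ext ?_ ?_) <;>
    simp [zmul, zA]

lemma zmul_zB_left (W : Zorn R) : zmul zB W = ((0, 0), (W.2.1, W.2.2)) := by
  refine Prod.ext (Prod.ext ?_ ?_) (Prod.ext ?_ ?_) <;>
    simp [zmul, zB]

lemma zmul_zB_right (W : Zorn R) : zmul W zB = ((0, W.1.2), (0, W.2.2)) := by
  refine Prod.ext (Prod.ext ?_ ?_) (Prod.ext ?_ ?_) <;>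
    simp [zmul, zB]

lemma zmul_zC_left (j : Fin 3) (W : Zorn R) :
    zmul (zC j) W = ((Pi.single j 1 ⬝ᵥ W.2.1, W.2.2 • (Pi.single j 1 : Fin 3 → R)),
      (crossProduct (Pi.single j 1) W.1.2, 0)) := by
  refine Prod.ext (Prod.ext ?_ ?_) (Prod.ext ?_ ?_) <;>
    simp [zmul, zC]

lemma zmul_zC_right (j : Fin 3) (W : Zorn R) :
    zmul W (zC j) = ((0, W.1.1 • (Pi.single j 1 : Fin 3 → R)),
      (crossProduct W.1.2 (Pi.single j 1), W.2.1 ⬝ᵥ Pi.single j 1)) := by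
  refine Prod.ext (Prod.ext ?_ ?_) (Prod.ext ?_ ?_) <;>
    simp [zmul, zC]

lemma zmul_zD_left (j : Fin 3) (W : Zorn R) :
    zmul (zD j) W = ((0, -crossProduct (Pi.single j 1) W.2.1),
      (W.1.1 • (Pi.single j 1 : Fin 3 → R), Pi.single j 1 ⬝ᵥ W.1.2)) := by
  refine Prod.ext (Prod.ext ?_ ?_) (Prod.ext ?_ ?_) <;>
    simp [zmul, zD, sub_eq_neg_self]

lemma zmul_zD_right (j : Fin 3) (W : Zorn R) :
    zmul W (zD j) = ((W.1.2 ⬝ᵥ Pi.single j 1, -crossProduct W.2.1 (Pi.single j 1)),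
      (W.2.2 • (Pi.single j 1 : Fin 3 → R), 0)) := by
  refine Prod.ext (Prod.ext ?_ ?_) (Prod.ext ?_ ?_) <;>
    simp [zmul, zD]

end Mul

section Struct

lemma zmul_zA_zA : zmul (zA : Zorn R) zA = zA := by
  rw [zmul_zA_left]; simp [zA, Prod.ext_iff]

lemma zmul_zA_zC (j : Fin 3) : zmul (zA : Zorn R) (zC j) = zC j := by
  rw [zmul_zA_left]; simp [zC, Prod.ext_iff]

lemma zmul_zC_zA (j : Fin 3) : zmul (zC j : Zorn R) zA = 0 := by
  rw [zmul_zC_left]; simp [zA, Prod.ext_iff]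

lemma zmul_zA_zD (j : Fin 3) : zmul (zA : Zorn R) (zD j) = 0 := by
  rw [zmul_zA_left]; simp [zD, Prod.ext_iff]

lemma zmul_zD_zA (j : Fin 3) : zmul (zD j : Zorn R) zA = zD j := by
  rw [zmul_zD_left]; simp [zA, zD, Prod.ext_iff]

lemma zmul_zC_zD (i j : Fin 3) :
    zmul (zC i : Zorn R) (zD j) = ((Pi.single i 1 ⬝ᵥ Pi.single j 1 : R)) • zA := by
  rw [zmul_zC_left]; simp [zA, zD, Prod.ext_iff, Prod.smul_fst, Prod.smul_snd, smul_eq_mul]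

lemma cross_single01 : crossProduct (Pi.single 0 1 : Fin 3 → R) (Pi.single 1 1)
    = Pi.single 2 1 := by
  refine vec3_ext ?_ ?_ ?_ <;> simp [cross_apply, Pi.single_apply]

lemma zmul_zC0_zC1 : zmul (zC 0 : Zorn R) (zC 1) = zD 2 := by
  rw [zmul_zC_right]; simp [zC, zD, Prod.ext_iff, cross_single01]

variable {d : Zorn R →ₗ[R] Zorn R}

lemma dzA_11 (hd : IsZornDeriv d) : (d zA).1.1 = 0 := by
  have h := congrArg (fun z : Zorn R => z.1.1) (hd zA zA)
  rw [zmul_zA_zA] at h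
  simp only [zmul_zA_left, zmul_zA_right, Prod.fst_add] at h
  linear_combination -h

lemma dzA_22 (hd : IsZornDeriv d) : (d zA).2.2 = 0 := by
  have h := congrArg (fun z : Zorn R => z.2.2) (hd zA zA)
  rw [zmul_zA_zA] at h
  simp only [zmul_zA_left, zmul_zA_right, Prod.snd_add] at h
  simpa using h

lemma dzC_21 (hd : IsZornDeriv d) (j : Fin 3) :
    (d (zC j)).2.1 = crossProduct ((d zA).1.2) (Pi.single j 1) := by
  have h := congrArg (fun z : Zorn R => z.2.1) (hd zA (zC j))
  rw [zmul_zA_zC] at h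
  simp only [zmul_zA_left, zmul_zC_right, Prod.snd_add, Pi.add_apply] at h
  simpa using h

lemma dzC_22 (hd : IsZornDeriv d) (j : Fin 3) :
    (d (zC j)).2.2 = (d zA).2.1 j := by
  have h := congrArg (fun z : Zorn R => z.2.2) (hd zA (zC j))
  rw [zmul_zA_zC] at h
  simp only [zmul_zA_left, zmul_zC_right, Prod.snd_add] at h
  simpa [dotProduct_single] using h

lemma dzC_11 (hd : IsZornDeriv d) (j : Fin 3) :
    (d (zC j)).1.1 = -(d zA).2.1 j := by
  have h := congrArg (fun z : Zorn R => z.1.1) (hd (zC j) zA)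
  rw [zmul_zC_zA] at h
  simp only [zmul_zC_left, zmul_zA_right, Prod.fst_add, map_zero] at h
  simp only [single_dotProduct, one_mul] at h
  simp only [LinearMap.map_zero, Prod.fst_zero] at h
  linear_combination -h

lemma dzD_22 (hd : IsZornDeriv d) (j : Fin 3) :
    (d (zD j)).2.2 = (d zA).1.2 j := by
  have h := congrArg (fun z : Zorn R => z.2.2) (hd (zD j) zA)
  rw [zmul_zD_zA] at h
  simp only [zmul_zD_left, zmul_zA_right, Prod.snd_add] at h
  simpa [single_dotProduct] using h

lemma dzD_12 (hd : IsZornDeriv d) (j : Fin 3) :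
    (d (zD j)).1.2 = crossProduct ((d zA).2.1) (Pi.single j 1) := by
  have h := congrArg (fun z : Zorn R => z.1.2) (hd (zD j) zA)
  rw [zmul_zD_zA] at h
  simp only [zmul_zD_left, zmul_zA_right, Prod.fst_add] at h
  rw [← cross_anticomm] at h
  simpa using h

lemma dzD_11 (hd : IsZornDeriv d) (j : Fin 3) :
    (d (zD j)).1.1 = -(d zA).1.2 j := by
  have h := congrArg (fun z : Zorn R => z.1.1) (hd zA (zD j))
  rw [zmul_zA_zD] at h
  simp only [zmul_zA_left, zmul_zD_right, Prod.fst_add, map_zero, Prod.fst_zero] at h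
  simp only [dotProduct_single, mul_one] at h
  linear_combination -h

lemma dzD_21 (hd : IsZornDeriv d) (i j : Fin 3) :
    (d (zD j)).2.1 i = -(d (zC i)).1.2 j := by
  have h := congrArg (fun z : Zorn R => z.1.1) (hd (zC i) (zD j))
  rw [zmul_zC_zD] at h
  simp only [_root_.map_smul, Prod.smul_fst, smul_eq_mul, zmul_zC_left, zmul_zD_right,
    Prod.fst_add] at h
  rw [dzA_11 hd] at h
  simp only [dotProduct_single, single_dotProduct, mul_one, one_mul,
    mul_zero] at h
  linear_combination -h

lemma dtrace (hd : IsZornDeriv d) :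
    (d (zC 0)).1.2 0 + (d (zC 1)).1.2 1 + (d (zC 2)).1.2 2 = 0 := by
  have h := congrArg (fun z : Zorn R => z.2.1 2) (hd (zC 0) (zC 1))
  rw [zmul_zC0_zC1] at h
  simp only [zmul_zC_left, zmul_zC_right, Prod.snd_add, Pi.add_apply] at h
  rw [dzD_21 hd 2 2] at h
  simp only [cross_apply, Matrix.cons_val_two, Matrix.tail_cons, Matrix.head_cons,
    Pi.single_apply] at h
  norm_num at h
  rw [show ∀ a b c : R, ![a, b, c] 2 = c from fun _ _ _ => rfl] at h
  linear_combination -h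

end Struct

section Ext

lemma zorn_decomp (a b : R) (x y : Fin 3 → R) :
    (((a, x), (y, b)) : Zorn R) = a • (zA : Zorn R) + b • zB
      + (x 0 • zC 0 + x 1 • zC 1 + x 2 • zC 2)
      + (y 0 • zD 0 + y 1 • zD 1 + y 2 • zD 2) := by
  refine Prod.ext (Prod.ext ?_ (vec3_ext ?_ ?_ ?_)) (Prod.ext (vec3_ext ?_ ?_ ?_) ?_) <;>
    simp [zA, zB, zC, zD, Pi.single_apply]

lemma zorn_hom_ext {f g : Zorn R →ₗ[R] Zorn R} (hA : f zA = g zA) (hB : f zB = g zB)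
    (hC : ∀ j, f (zC j) = g (zC j)) (hD : ∀ j, f (zD j) = g (zD j)) : f = g := by
  refine LinearMap.ext fun X => ?_
  obtain ⟨⟨a, x⟩, ⟨y, b⟩⟩ := X
  rw [zorn_decomp a b x y]
  simp only [map_add, _root_.map_smul, hA, hB, hC 0, hC 1, hC 2, hD 0, hD 1, hD 2]

lemma zmul_one (X : Zorn R) : zmul X zornOne = X := by
  simp [zmul, zornOne, Prod.ext_iff]

lemma one_zmul (X : Zorn R) : zmul zornOne X = X := by
  simp [zmul, zornOne, Prod.ext_iff]

variable {d : Zorn R →ₗ[R] Zorn R}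

lemma d_one (hd : IsZornDeriv d) : d zornOne = 0 := by
  have h := hd zornOne zornOne
  rw [zmul_one, zmul_one, one_zmul] at h
  exact left_eq_add.mp h

lemma dzB (hd : IsZornDeriv d) : d zB = -d zA := by
  have : (zB : Zorn R) = zornOne - zA := by
    simp [zA, zB, zornOne, Prod.ext_iff]
  rw [this, map_sub, d_one hd, zero_sub]

end Ext

section DerOfLemmas

lemma derOf_add (A B : Matrix (Fin 3) (Fin 3) R) (u u' v v' : Fin 3 → R) :
    derOf (A + B) (u + u') (v + v') = derOf A u v + derOf B u' v' := by
  refine LinearMap.ext fun X => ?_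
  refine Prod.ext (Prod.ext ?_ (vec3_ext ?_ ?_ ?_)) (Prod.ext (vec3_ext ?_ ?_ ?_) ?_) <;>
    simp only [derOf_apply, LinearMap.add_apply, Prod.fst_add, Prod.snd_add, Pi.add_apply,
      Matrix.add_apply, Matrix.cons_val_zero, Matrix.cons_val_one, Matrix.head_cons,
      Matrix.cons_val_two, Matrix.tail_cons, add_dotProduct] <;> ring

lemma derOf_smul (c : R) (A : Matrix (Fin 3) (Fin 3) R) (u v : Fin 3 → R) :
    derOf (c • A) (c • u) (c • v) = c • derOf A u v := by
  refine LinearMap.ext fun X => ?_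
  refine Prod.ext (Prod.ext ?_ (vec3_ext ?_ ?_ ?_)) (Prod.ext (vec3_ext ?_ ?_ ?_) ?_) <;>
    simp only [derOf_apply, LinearMap.smul_apply, Prod.smul_fst, Prod.smul_snd, Pi.smul_apply,
      Matrix.smul_apply, smul_eq_mul, Matrix.cons_val_zero, Matrix.cons_val_one,
      Matrix.head_cons, Matrix.cons_val_two, Matrix.tail_cons, smul_dotProduct] <;> ring

lemma matOf_derOf (A : Matrix (Fin 3) (Fin 3) R) (u v : Fin 3 → R) :
    (Matrix.of fun i j => (derOf A u v (zC j)).1.2 i) = A := by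
  refine Matrix.ext fun i j => ?_
  fin_cases i <;> fin_cases j <;> simp [derOf_apply, zC, Pi.single_apply]

lemma derOf_zA_12 (A : Matrix (Fin 3) (Fin 3) R) (u v : Fin 3 → R) :
    (derOf A u v zA).1.2 = u := by
  refine vec3_ext ?_ ?_ ?_ <;> simp [derOf_apply, zA]

lemma derOf_zA_21 (A : Matrix (Fin 3) (Fin 3) R) (u v : Fin 3 → R) :
    (derOf A u v zA).2.1 = v := by
  refine vec3_ext ?_ ?_ ?_ <;> simp [derOf_apply, zA]

set_option maxHeartbeats 1000000 in
lemma derOf_eq_of_deriv {d : Zorn R →ₗ[R] Zorn R} (hd : IsZornDeriv d) :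
    derOf (Matrix.of fun i j => (d (zC j)).1.2 i) ((d zA).1.2) ((d zA).2.1) = d := by
  refine zorn_hom_ext ?_ ?_ ?_ ?_
  · refine Prod.ext (Prod.ext ?_ (vec3_ext ?_ ?_ ?_)) (Prod.ext (vec3_ext ?_ ?_ ?_) ?_) <;>
      (try simp only [dzA_11 hd, dzA_22 hd]) <;>
      simp [derOf_apply, zA]
  · rw [dzB hd]
    refine Prod.ext (Prod.ext ?_ (vec3_ext ?_ ?_ ?_)) (Prod.ext (vec3_ext ?_ ?_ ?_) ?_) <;>
      (try simp only [Prod.fst_neg, Prod.snd_neg, Pi.neg_apply, dzA_11 hd, dzA_22 hd]) <;>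
      simp [derOf_apply, zB]
  · intro j
    refine Prod.ext (Prod.ext ?_ (vec3_ext ?_ ?_ ?_)) (Prod.ext (vec3_ext ?_ ?_ ?_) ?_) <;>
      (try simp only [dzC_11 hd, dzC_21 hd, dzC_22 hd]) <;>
      fin_cases j <;>
      simp [derOf_apply, Matrix.of_apply, zC, cross_apply, Pi.single_apply]
  · intro j
    refine Prod.ext (Prod.ext ?_ (vec3_ext ?_ ?_ ?_)) (Prod.ext (vec3_ext ?_ ?_ ?_) ?_) <;>
      (try simp only [dzD_11 hd, dzD_12 hd, dzD_21 hd, dzD_22 hd]) <;>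
      fin_cases j <;>
      simp [derOf_apply, Matrix.of_apply, zD, cross_apply, Pi.single_apply]

end DerOfLemmas

section Equiv

variable (F : Type*) [Field F]

noncomputable def zornDerEquiv :
    ((LinearMap.ker (Matrix.traceLinearMap (Fin 3) F F)) × ((Fin 3 → F) × (Fin 3 → F)))
      ≃ₗ[F] ZornDer F where
  toFun p := ⟨derOf p.1.1 p.2.1 p.2.2, derOf_isDeriv _ p.1.2 _ _⟩
  map_add' p q := Subtype.ext (derOf_add _ _ _ _ _ _)
  map_smul' c p := Subtype.ext (derOf_smul _ _ _ _)
  invFun d := (⟨Matrix.of fun i j => ((d : Zorn F →ₗ[F] Zorn F) (zC j)).1.2 i, by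
      rw [LinearMap.mem_ker]
      have := dtrace d.2
      simpa [Matrix.traceLinearMap, Matrix.trace_fin_three] using this⟩,
    ((d : Zorn F →ₗ[F] Zorn F) zA).1.2, ((d : Zorn F →ₗ[F] Zorn F) zA).2.1)
  left_inv p :=
    Prod.ext (Subtype.ext (matOf_derOf _ _ _))
      (Prod.ext (derOf_zA_12 _ _ _) (derOf_zA_21 _ _ _))
  right_inv d := Subtype.ext (derOf_eq_of_deriv d.2)

end Equiv

theorem finrank_zorn_der {F : Type*} [Field F] (h2 : (2 : F) ≠ 0) (h3 : (3 : F) ≠ 0) :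
    Module.finrank F (ZornDer F) = 14 := by
  classical
  have h1 : Module.finrank F (LinearMap.ker (Matrix.traceLinearMap (Fin 3) F F)) = 8 := by
    have hr : LinearMap.range (Matrix.traceLinearMap (Fin 3) F F) = ⊤ := by
      rw [LinearMap.range_eq_top]
      intro c
      exact ⟨Matrix.single 0 0 c, Matrix.trace_single_eq_same (0 : Fin 3) c⟩
    have h9 : Module.finrank F (Matrix (Fin 3) (Fin 3) F) = 9 := by
      simp [Module.finrank_matrix]
    have hrn := LinearMap.finrank_range_add_finrank_ker (Matrix.traceLinearMap (Fin 3) F F)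
    rw [hr, finrank_top, Module.finrank_self, h9] at hrn
    omega
  rw [← LinearEquiv.finrank_eq (zornDerEquiv F), Module.finrank_prod, Module.finrank_prod,
    h1, Module.finrank_pi]
  simp
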